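/- Let n ≥ 2 and let Γ satisfy condition (C) with λ* := (1,−1,…,−1) ∉ closure(Γ) and eₙ := (0,…,0,1) ∉ ∂Γ, i.e. 1 < μ_Γ⁻ < ∞. Then there exists no function v ∈ C²(closure(ℝⁿ₊)) depending only on the variable xₙ that satisfies both λ(A[v]) ∈ Γ on closure(ℝⁿ₊) and ∂v/∂xₙ(0) ≤ 0. -/

import Mathlib

noncomputable section

open Filter Metric Polynomial MeasureTheory
open scoped Topology

namespace CLL

abbrev E (d : ℕ) := EuclideanSpace ℝ (Fin d)

/-- One-sided partial derivative (within a set `s`) in the `i`-th coordinate direction. -/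
def pd (d : ℕ) (s : Set (E d)) (v : E d → ℝ) (i : Fin d) (x : E d) : ℝ :=
  fderivWithin ℝ v s x (EuclideanSpace.single i 1)

/-- The Möbius Hessian `A[v] = e^{-2v} (-∇² v + ∇v ⊗ ∇v - |∇v|²/2 · I)`,
computed with derivatives within `s`. -/
def mHess (d : ℕ) (s : Set (E d)) (v : E d → ℝ) (x : E d) : Matrix (Fin d) (Fin d) ℝ :=
  fun i j =>
    Real.exp (-2 * v x) *
      (-(pd d s (fun y => pd d s v j y) i x)
        + pd d s v i x * pd d s v j x
        - (1 / 2) * (∑ k, (pd d s v k x) ^ 2) * (if i = j then (1 : ℝ) else 0))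

/-- `μ` lists the eigenvalues (with multiplicity, in some order) of the matrix `M`. -/
def IsEigList (d : ℕ) (M : Matrix (Fin d) (Fin d) ℝ) (μ : Fin d → ℝ) : Prop :=
  M.charpoly = ∏ i, (X - C (μ i))

/-- `λ* = (1, -1, …, -1)`. -/
def lamStar (d : ℕ) : Fin d → ℝ := fun i => if (i : ℕ) = 0 then 1 else -1

/-- Condition (C): `Γ ⊊ ℝⁿ` is a nonempty open symmetric cone with vertex at the origin
satisfying `Γ + Γₙ ⊆ Γ`. -/
def CondC (d : ℕ) (Γ : Set (Fin d → ℝ)) : Prop :=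
  Γ.Nonempty ∧ Γ ≠ Set.univ ∧ IsOpen Γ ∧
    (∀ t : ℝ, 0 < t → ∀ lam ∈ Γ, t • lam ∈ Γ) ∧
    (∀ σ : Equiv.Perm (Fin d), ∀ lam ∈ Γ, lam ∘ σ ∈ Γ) ∧
    (∀ lam ∈ Γ, ∀ μ : Fin d → ℝ, (∀ i, 0 < μ i) → lam + μ ∈ Γ)

/-- Condition (F): `f` is symmetric on `Γ`, locally Lipschitz, and for each compact
`K ⊆ Γ` its partial derivatives are bounded below a.e. on `K` by a positive constant. -/
def CondF (d : ℕ) (Γ : Set (Fin d → ℝ)) (f : (Fin d → ℝ) → ℝ) : Prop :=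
  (∀ σ : Equiv.Perm (Fin d), ∀ lam ∈ Γ, f (lam ∘ σ) = f lam) ∧
  (∀ lam ∈ Γ, ∃ K : NNReal, ∃ t ∈ nhdsWithin lam Γ, LipschitzOnWith K f t) ∧
  (∀ K : Set (Fin d → ℝ), K ⊆ Γ → IsCompact K →
    ∃ c > (0 : ℝ), ∀ᵐ lam ∂(volume.restrict K),
      ∀ i : Fin d, c ≤ lineDeriv ℝ f lam (Pi.single i 1))

/-- The index of the last coordinate. -/
def lastIdx (n : ℕ) : Fin (n + 2) := Fin.last (n + 1)

/-- The open upper half space `ℝⁿ₊`. -/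
def upperH (n : ℕ) : Set (E (n + 2)) := {x | 0 < x (lastIdx n)}

/-- The standard bubble `log (a / (1 + b |x - x̄|²))`. -/
def bubble (n : ℕ) (a b : ℝ) (xbar : E (n + 2)) (x : E (n + 2)) : ℝ :=
  Real.log (a / (1 + b * ‖x - xbar‖ ^ 2))

/-- The open upper half ball `B_r⁺`. -/
def Bplus (n : ℕ) (r : ℝ) : Set (E (n + 2)) := Metric.ball 0 r ∩ upperH n

/-- The set defining `μ_Γ⁻`. -/
def muSet (d : ℕ) (Γ : Set (Fin d → ℝ)) : Set ℝ :=
  {c : ℝ | (fun i : Fin d => if (i : ℕ) = 0 then c else -1) ∈ closure Γ}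

/-- `μ_Γ⁻ = inf { c : (c,-1,…,-1) ∈ closure Γ }`. -/
def muMinus (d : ℕ) (Γ : Set (Fin d → ℝ)) : ℝ :=
  sInf (muSet d Γ)

end CLL

open CLL

section Aux

open Set

/-- From equality of multisets of values, get a permutation relating two tuples. -/
lemma CLLaux.exists_comp_perm_eq {d : ℕ} (f g : Fin d → ℝ)
    (h : Multiset.map f Finset.univ.val = Multiset.map g Finset.univ.val) :
    ∃ σ : Equiv.Perm (Fin d), f ∘ σ = g := by
  have hperm : (List.ofFn (f ∘ Tuple.sort f) : Multiset ℝ)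
      = (List.ofFn (g ∘ Tuple.sort g) : Multiset ℝ) := by
    rw [Multiset.coe_eq_coe.mpr ((Tuple.sort f).ofFn_comp_perm f),
        Multiset.coe_eq_coe.mpr ((Tuple.sort g).ofFn_comp_perm g)]
    rw [Fin.univ_val_map, Fin.univ_val_map] at h
    exact_mod_cast h
  have hsorted := List.Perm.eq_of_sortedLE ((Tuple.monotone_sort f).sortedLE_ofFn)
    ((Tuple.monotone_sort g).sortedLE_ofFn) (Multiset.coe_eq_coe.mp hperm)
  have heq : f ∘ Tuple.sort f = g ∘ Tuple.sort g := List.ofFn_injective hsorted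
  refine ⟨((Tuple.sort g)⁻¹).trans (Tuple.sort f), funext fun i => ?_⟩
  have := congrFun heq ((Tuple.sort g)⁻¹ i)
  simpa using this

lemma CLLaux.roots_prod (d : ℕ) (a : Fin d → ℝ) :
    (∏ i, (X - C (a i))).roots = Multiset.map a Finset.univ.val := by
  rw [Finset.prod]
  rw [show Multiset.map (fun i => X - C (a i)) Finset.univ.val
      = Multiset.map (fun r => X - C r) (Multiset.map a Finset.univ.val) from by
    rw [Multiset.map_map]; rfl]
  exact roots_multiset_prod_X_sub_C _

lemma CLLaux.charpoly_diagonal (d : ℕ) (D : Fin d → ℝ) :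
    (Matrix.diagonal D).charpoly = ∏ i, (X - C (D i)) := by
  rw [Matrix.charpoly, show Matrix.charmatrix (Matrix.diagonal D)
      = Matrix.diagonal (fun i => X - C (D i)) from ?_, Matrix.det_diagonal]
  ext i j
  by_cases hij : i = j
  · subst hij; simp [Matrix.charmatrix_apply_eq]
  · rw [Matrix.charmatrix_apply_ne _ _ _ hij, Matrix.diagonal_apply_ne _ hij,
      Matrix.diagonal_apply_ne _ hij, map_zero, neg_zero]

lemma CLLaux.mem_muSet_upper {d : ℕ} {Γ : Set (Fin d → ℝ)}
    (hadd : ∀ lam ∈ Γ, ∀ μ : Fin d → ℝ, (∀ i, 0 < μ i) → lam + μ ∈ Γ)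
    (c : ℝ) (hc : c ∈ muSet d Γ) (c' : ℝ) (hcc : c < c') : c' ∈ muSet d Γ := by
  have haddc : ∀ y ∈ closure Γ, ∀ μ : Fin d → ℝ, (∀ i, 0 < μ i) → y + μ ∈ closure Γ := by
    intro y hy μ hμ
    exact map_mem_closure (f := fun z => z + μ) (continuous_add_right μ) hy
      (fun z hz => hadd z hz μ hμ)
  have htd : Tendsto (fun ε : ℝ => (fun i : Fin d => if (i:ℕ) = 0 then c else -1) +
      (fun i : Fin d => if (i:ℕ) = 0 then c' - c else ε)) (𝓝[>] 0)
      (𝓝 (fun i : Fin d => if (i:ℕ) = 0 then c' else -1)) := by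
    rw [tendsto_pi_nhds]
    intro i
    simp only [Pi.add_apply]
    by_cases h : (i:ℕ) = 0
    · simp only [h, if_true]
      rw [show (fun _ : ℝ => c + (c' - c)) = (fun _ : ℝ => c') from funext fun _ => by ring]
      exact tendsto_const_nhds
    · simp only [h, if_false]
      have h2 : Tendsto (fun ε : ℝ => -1 + ε) (𝓝 0) (𝓝 (-1 : ℝ)) := by
        simpa using (tendsto_const_nhds.add tendsto_id :
          Tendsto (fun ε : ℝ => -1 + ε) (𝓝 0) (𝓝 (-1 + 0 : ℝ)))
      exact h2.mono_left nhdsWithin_le_nhds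
  refine isClosed_closure.mem_of_tendsto htd ?_
  filter_upwards [self_mem_nhdsWithin] with ε (hε : 0 < ε)
  exact haddc _ hc (fun i : Fin d => if (i:ℕ) = 0 then c' - c else ε)
    (fun i => by by_cases h : (i:ℕ) = 0 <;> simp only [h, if_true, if_false] <;> linarith)

lemma CLLaux.isClosed_muSet {d : ℕ} (Γ : Set (Fin d → ℝ)) : IsClosed (muSet d Γ) := by
  have : Continuous (fun c : ℝ => (fun i : Fin d => if (i:ℕ) = 0 then c else -1)) := by
    apply continuous_pi
    intro i
    by_cases h : (i:ℕ) = 0 <;> simp only [h, if_true, if_false] <;>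
      first | exact continuous_id | exact continuous_const
  exact IsClosed.preimage this isClosed_closure

lemma CLLaux.mem_muS_of_mem {d : ℕ} {Γ : Set (Fin d → ℝ)}
    (hscale : ∀ t : ℝ, 0 < t → ∀ lam ∈ Γ, t • lam ∈ Γ)
    (hperm : ∀ σ : Equiv.Perm (Fin d), ∀ lam ∈ Γ, lam ∘ σ ∈ Γ)
    (ℓ : Fin d) (hℓ : (ℓ:ℕ) ≠ 0) (Av Bv : ℝ) (hB : Bv < 0)
    (hmem : (fun i => if i = ℓ then Av else Bv) ∈ Γ) : Av / (-Bv) ∈ muSet d Γ := by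
  have h0 : (0:ℕ) < d := lt_of_le_of_lt (Nat.zero_le _) ℓ.2
  have hs : (0:ℝ) < 1 / (-Bv) := by rw [one_div]; exact inv_pos.mpr (neg_pos.mpr hB)
  have h1 := hscale _ hs _ hmem
  have h2 := hperm (Equiv.swap ⟨0, h0⟩ ℓ) _ h1
  have h0ℓ : (⟨0, h0⟩ : Fin d) ≠ ℓ := by
    intro h; apply hℓ; rw [← h]
  have heq : (((1 / (-Bv)) • fun i => if i = ℓ then Av else Bv) ∘ (Equiv.swap ⟨0, h0⟩ ℓ))
      = fun i : Fin d => if (i:ℕ) = 0 then Av / (-Bv) else -1 := by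
    funext i
    simp only [Function.comp_apply, Pi.smul_apply, smul_eq_mul]
    by_cases hi : (i:ℕ) = 0
    · have hie : i = ⟨0, h0⟩ := Fin.ext hi
      rw [if_pos hi, hie, Equiv.swap_apply_left, if_pos rfl, one_div, inv_mul_eq_div]
    · rw [if_neg hi]
      by_cases hiℓ : i = ℓ
      · rw [hiℓ, Equiv.swap_apply_right, if_neg h0ℓ, one_div, inv_mul_eq_div, div_neg,
          div_self hB.ne]
      · rw [Equiv.swap_apply_of_ne_of_ne (fun h => hi (by rw [h])) hiℓ, if_neg hiℓ, one_div,
          inv_mul_eq_div, div_neg, div_self hB.ne]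
  rw [heq] at h2
  exact subset_closure h2

lemma CLLaux.perturb {d : ℕ} {Γ : Set (Fin d → ℝ)} (hopen : IsOpen Γ) (ℓ : Fin d) (Av : ℝ)
    (hmem : (fun i : Fin d => if i = ℓ then Av else 0) ∈ Γ) :
    ∃ ε : ℝ, 0 < ε ∧ (fun i : Fin d => if i = ℓ then Av else -ε) ∈ Γ := by
  have htd : Tendsto (fun ε : ℝ => (fun i : Fin d => if i = ℓ then Av else -ε)) (𝓝[>] 0)
      (𝓝 (fun i : Fin d => if i = ℓ then Av else 0)) := by
    rw [tendsto_pi_nhds]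
    intro i
    by_cases hi : i = ℓ
    · simp only [hi, if_true]; exact tendsto_const_nhds
    · simp only [hi, if_false]
      have : Tendsto (fun ε : ℝ => -ε) (𝓝 0) (𝓝 (-0 : ℝ)) := tendsto_id.neg
      rw [neg_zero] at this
      exact this.mono_left nhdsWithin_le_nhds
  have := htd.eventually_mem (hopen.mem_nhds hmem)
  obtain ⟨ε, hε1, hε2⟩ := (this.and self_mem_nhdsWithin).exists
  exact ⟨ε, hε2, hε1⟩

lemma CLLaux.ode_contra {w1 : ℝ → ℝ} (hw1 : DifferentiableOn ℝ w1 (Ici 0)) (δ : ℝ) (hδ : 0 < δ)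
    (h0 : w1 0 ≤ 0)
    (hineq : ∀ t ∈ Ici (0:ℝ), derivWithin w1 (Ici 0) t < 0 ∧
      derivWithin w1 (Ici 0) t ≤ -δ * (w1 t)^2) : False := by
  set u : ℝ → ℝ := fun t => -(w1 t) with hu
  have hderiv : ∀ t ∈ Ioi (0:ℝ), deriv u t = -(derivWithin w1 (Ici 0) t) := by
    intro t ht
    have hmem : Ici (0:ℝ) ∈ 𝓝 t := Ici_mem_nhds ht
    rw [deriv.fun_neg, derivWithin_of_mem_nhds hmem]
  have hudiff : ∀ t ∈ Ioi (0:ℝ), DifferentiableAt ℝ u t := by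
    intro t ht
    exact ((hw1 t (Set.mem_Ici.mpr (le_of_lt (Set.mem_Ioi.mp ht)))).differentiableAt (Ici_mem_nhds ht)).neg
  have hucont : ContinuousOn u (Ici 0) := (hw1.continuousOn).neg
  have hmono : StrictMonoOn u (Ici 0) := by
    apply strictMonoOn_of_deriv_pos (convex_Ici 0) hucont
    intro t ht
    rw [interior_Ici] at ht
    rw [hderiv t ht]
    have := (hineq t (Set.mem_Ici.mpr (le_of_lt (Set.mem_Ioi.mp ht)))).1
    linarith
  have hu0 : 0 ≤ u 0 := by simp [hu]; linarith
  set a : ℝ := u 1 with ha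
  have hapos : 0 < a := lt_of_le_of_lt hu0 (hmono self_mem_Ici (by norm_num) one_pos)
  have hupos : ∀ t ∈ Ici (1:ℝ), a ≤ u t := by
    intro t ht
    rcases eq_or_lt_of_le ht.out with h | h
    · rw [← h]
    · exact le_of_lt (hmono (by norm_num) (le_trans (by norm_num) ht.out) h)
  set g : ℝ → ℝ := fun t => δ * t + (u t)⁻¹ with hg
  have hanti : AntitoneOn g (Ici 1) := by
    apply antitoneOn_of_deriv_nonpos (convex_Ici 1)
    · apply ContinuousOn.add (continuousOn_const.mul continuousOn_id)
      apply ContinuousOn.inv₀ (hucont.mono (fun t ht => le_trans zero_le_one ht.out))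
      intro t ht
      exact ne_of_gt (lt_of_lt_of_le hapos (hupos t ht))
    · rw [interior_Ici]
      intro t ht
      have ht0 : t ∈ Ioi (0:ℝ) := Set.mem_Ioi.mpr (lt_trans one_pos (Set.mem_Ioi.mp ht))
      exact ((differentiableAt_const _).mul differentiableAt_id).add
        ((hudiff t ht0).inv
          (ne_of_gt (lt_of_lt_of_le hapos (hupos t (Set.mem_Ici.mpr (le_of_lt (Set.mem_Ioi.mp ht))))))) |>.differentiableWithinAt
    · rw [interior_Ici]
      intro t ht
      have ht0 : t ∈ Ioi (0:ℝ) := Set.mem_Ioi.mpr (lt_trans one_pos (Set.mem_Ioi.mp ht))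
      have hut : 0 < u t := lt_of_lt_of_le hapos (hupos t (Set.mem_Ici.mpr (le_of_lt (Set.mem_Ioi.mp ht))))
      have hd : deriv g t = δ + -(deriv u t) / (u t)^2 := by
        rw [hg]
        rw [deriv_fun_add (f := fun y => δ * y) (g := fun y => (u y)⁻¹) (by fun_prop)
          ((hudiff t ht0).inv hut.ne')]
        rw [deriv_fun_inv'' (hudiff t ht0) hut.ne']
        rw [deriv_const_mul (d := fun y => y) _ (by fun_prop), deriv_id'', mul_one]
      rw [hd, hderiv t ht0]
      have h1 := (hineq t (Set.mem_Ici.mpr (le_of_lt (lt_trans one_pos (Set.mem_Ioi.mp ht))))).2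
      have h2 : (w1 t)^2 = (u t)^2 := by rw [hu]; ring
      rw [neg_neg]
      have h3 : derivWithin w1 (Ici 0) t / (u t)^2 ≤ -δ := by
        rw [div_le_iff₀ (by positivity)]
        calc derivWithin w1 (Ici 0) t ≤ -δ * (w1 t)^2 := h1
        _ = -δ * (u t)^2 := by rw [h2]
      linarith
  obtain ⟨T, hT1, hTge⟩ : ∃ T : ℝ, 1 ≤ T ∧ (δ * 1 + (u 1)⁻¹) / δ + 1 ≤ T :=
    ⟨max 1 ((δ * 1 + (u 1)⁻¹) / δ + 1), le_max_left _ _, le_max_right _ _⟩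
  have hgT : g T ≤ g 1 := hanti self_mem_Ici hT1 hT1
  have h4 : δ * T + (u T)⁻¹ ≤ δ * 1 + (u 1)⁻¹ := hgT
  have huT : 0 < u T := lt_of_lt_of_le hapos (hupos T hT1)
  have h5 : δ * 1 + (u 1)⁻¹ + δ ≤ δ * T := by
    have h6 := mul_le_mul_of_nonneg_left hTge (le_of_lt hδ)
    have h7 : δ * ((δ * 1 + (u 1)⁻¹) / δ + 1) = δ * 1 + (u 1)⁻¹ + δ := by field_simp
    linarith
  have hinv : (0:ℝ) < (u T)⁻¹ := by positivity
  linarith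

end Aux

set_option maxHeartbeats 1600000 in
/-- No one-variable function with `λ(A[v]) ∈ Γ` and nonpositive normal derivative at the
boundary, when `1 < μ_Γ⁻ < ∞` (discussion below Lemma 4.1 of the paper). -/
theorem stmt14 (n : ℕ) (Γ : Set (Fin (n + 2) → ℝ)) (hC : CondC (n + 2) Γ)
    (hstar : lamStar (n + 2) ∉ closure Γ) (hne : (muSet (n + 2) Γ).Nonempty)
    (v : E (n + 2) → ℝ) (hv : ContDiffOn ℝ 2 v (closure (upperH n)))
    (hdep : ∀ x ∈ closure (upperH n),
      v x = v (EuclideanSpace.single (lastIdx n) (x (lastIdx n))))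
    (heig : ∀ x ∈ closure (upperH n), ∃ ev : Fin (n + 2) → ℝ,
      IsEigList (n + 2) (mHess (n + 2) (closure (upperH n)) v x) ev ∧ ev ∈ Γ)
    (hder : pd (n + 2) (closure (upperH n)) v (lastIdx n) 0 ≤ 0) :
    False := by
  classical
  obtain ⟨-, -, hopen, hscale, hperm, hadd⟩ := hC
  set ℓ : Fin (n + 2) := lastIdx n with hℓdef
  set S : Set (E (n + 2)) := closure (upperH n) with hSdef
  -- S is the closed half space
  have hS : S = {x : E (n + 2) | 0 ≤ x ℓ} := by
    apply Set.Subset.antisymm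
    · exact closure_minimal (fun x hx => le_of_lt hx.out)
        (isClosed_le continuous_const (EuclideanSpace.proj (𝕜 := ℝ) ℓ).continuous)
    · intro x hx
      have htd : Tendsto (fun ε : ℝ => x + ε • EuclideanSpace.single ℓ (1:ℝ)) (𝓝[>] 0) (𝓝 x) := by
        have hcont : Continuous (fun ε : ℝ => x + ε • EuclideanSpace.single ℓ (1:ℝ)) := by
          continuity
        have h0 := hcont.tendsto 0
        simp only [zero_smul, add_zero] at h0
        exact h0.mono_left nhdsWithin_le_nhds
      refine mem_closure_of_tendsto htd ?_
      filter_upwards [self_mem_nhdsWithin] with ε (hε : 0 < ε)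
      show 0 < (x + ε • EuclideanSpace.single ℓ (1:ℝ)) ℓ
      have : (x + ε • EuclideanSpace.single ℓ (1:ℝ)) ℓ = x ℓ + ε := by
        simp [EuclideanSpace.single_apply]
      rw [this]
      exact lt_of_lt_of_le hε (by linarith [hx.out])
  have hconv : Convex ℝ S := by
    rw [hS]
    exact (convex_Ici 0).linear_preimage (EuclideanSpace.proj (𝕜 := ℝ) ℓ).toLinearMap
  have hUD : UniqueDiffOn ℝ S := by
    apply uniqueDiffOn_convex hconv
    refine ⟨EuclideanSpace.single ℓ (1:ℝ), ?_⟩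
    rw [hS]
    apply mem_interior.mpr
    refine ⟨{x : E (n + 2) | 0 < x ℓ}, fun x hx => le_of_lt hx.out, ?_, ?_⟩
    · exact isOpen_lt continuous_const (EuclideanSpace.proj (𝕜 := ℝ) ℓ).continuous
    · show (0:ℝ) < EuclideanSpace.single ℓ (1:ℝ) ℓ
      simp [EuclideanSpace.single_apply]
  -- the one-variable profile
  set ι : ℝ →L[ℝ] E (n + 2) :=
    (ContinuousLinearMap.id ℝ ℝ).smulRight (EuclideanSpace.single ℓ (1:ℝ)) with hιdef
  have hι : ∀ t : ℝ, ι t = EuclideanSpace.single ℓ t := by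
    intro t
    apply PiLp.ext
    intro j
    simp [hιdef, EuclideanSpace.single_apply]
  have hιS : ∀ t : ℝ, t ∈ Set.Ici (0:ℝ) → ι t ∈ S := by
    intro t ht
    rw [hS, hι t]
    show (0:ℝ) ≤ EuclideanSpace.single ℓ t ℓ
    simp [EuclideanSpace.single_apply]
    exact ht.out
  set w : ℝ → ℝ := fun t => v (EuclideanSpace.single ℓ t) with hwdef
  have hw : ContDiffOn ℝ 2 w (Set.Ici 0) := by
    have := hv.comp (ι.contDiff.contDiffOn) hιS
    refine this.congr ?_
    intro t ht
    rw [hwdef]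
    simp only [Function.comp_apply, hι t]
  set w1 : ℝ → ℝ := derivWithin w (Set.Ici 0) with hw1def
  set w2 : ℝ → ℝ := derivWithin w1 (Set.Ici 0) with hw2def
  have hwd : DifferentiableOn ℝ w (Set.Ici 0) := hw.differentiableOn (by norm_num)
  have hw1c : ContDiffOn ℝ 1 w1 (Set.Ici 0) :=
    hw.derivWithin (uniqueDiffOn_Ici 0) (by norm_num)
  have hw1d : DifferentiableOn ℝ w1 (Set.Ici 0) := hw1c.differentiableOn (by norm_num)
  have hvw : ∀ y ∈ S, v y = w (y ℓ) := by
    intro y hy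
    rw [hwdef]
    exact hdep y hy
  -- key derivative computation
  have key : ∀ (g : ℝ → ℝ), DifferentiableOn ℝ g (Set.Ici 0) →
      ∀ (u : E (n + 2) → ℝ), (∀ y ∈ S, u y = g (y ℓ)) →
      ∀ x ∈ S, ∀ i : Fin (n + 2),
        pd (n + 2) S u i x = (if i = ℓ then derivWithin g (Set.Ici 0) (x ℓ) else 0) := by
    intro g hg u hu x hx i
    have hxl : x ℓ ∈ Set.Ici (0:ℝ) := by rw [hS] at hx; exact hx.out
    have hmap : Set.MapsTo (fun y : E (n + 2) => y ℓ) S (Set.Ici 0) := by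
      intro y hy; rw [hS] at hy; exact hy.out
    have hgd : HasDerivWithinAt g (derivWithin g (Set.Ici 0) (x ℓ)) (Set.Ici 0) (x ℓ) :=
      (hg _ hxl).hasDerivWithinAt
    have hπ : HasFDerivWithinAt (fun y : E (n + 2) => y ℓ)
        (EuclideanSpace.proj (𝕜 := ℝ) ℓ) S x :=
      (EuclideanSpace.proj (𝕜 := ℝ) ℓ).hasFDerivWithinAt
    have hcomp : HasFDerivWithinAt (fun y : E (n + 2) => g (y ℓ))
        (derivWithin g (Set.Ici 0) (x ℓ) • (EuclideanSpace.proj (𝕜 := ℝ) ℓ)) S x :=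
      hgd.comp_hasFDerivWithinAt x hπ hmap
    have hcongr : HasFDerivWithinAt u
        (derivWithin g (Set.Ici 0) (x ℓ) • (EuclideanSpace.proj (𝕜 := ℝ) ℓ)) S x :=
      hcomp.congr' (fun y hy => (hu y hy)) hx
    show fderivWithin ℝ u S x (EuclideanSpace.single i 1)
      = (if i = ℓ then derivWithin g (Set.Ici 0) (x ℓ) else 0)
    rw [hcongr.fderivWithin (hUD x hx)]
    simp only [ContinuousLinearMap.smul_apply, smul_eq_mul]
    rw [show (EuclideanSpace.proj (𝕜 := ℝ) ℓ) (EuclideanSpace.single i (1:ℝ))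
        = (EuclideanSpace.single i (1:ℝ)) ℓ from rfl, EuclideanSpace.single_apply]
    by_cases h : i = ℓ
    · subst h; simp
    · simp [h, Ne.symm h]
  have hpdv : ∀ x ∈ S, ∀ i : Fin (n + 2),
      pd (n + 2) S v i x = (if i = ℓ then w1 (x ℓ) else 0) :=
    fun x hx i => key w hwd v hvw x hx i
  have hpdpd : ∀ x ∈ S, ∀ i j : Fin (n + 2),
      pd (n + 2) S (fun y => pd (n + 2) S v j y) i x
        = (if i = ℓ then (if j = ℓ then w2 (x ℓ) else 0) else 0) := by
    intro x hx i j
    have hxl : x ℓ ∈ Set.Ici (0:ℝ) := by rw [hS] at hx; exact hx.out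
    by_cases hj : j = ℓ
    · subst hj
      have := key w1 hw1d (fun y => pd (n + 2) S v ℓ y)
        (fun y hy => by show pd (n + 2) S v ℓ y = w1 (y ℓ); rw [hpdv y hy ℓ, if_pos rfl])
        x hx i
      rw [this]
      simp [hw2def]
    · have := key (fun _ => (0:ℝ)) (differentiableOn_const 0)
        (fun y => pd (n + 2) S v j y)
        (fun y hy => by show pd (n + 2) S v j y = 0; rw [hpdv y hy j, if_neg hj]) x hx i
      rw [this]
      have hd0 : derivWithin (fun _ : ℝ => (0:ℝ)) (Set.Ici 0) (x ℓ) = 0 := by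
        rw [derivWithin_congr (f := fun _ : ℝ => (0:ℝ)) (fun y _ => rfl) rfl]
        simp
      rw [hd0]
      simp [hj]
  -- the matrix is diagonal
  obtain ⟨A, B, hA, hB⟩ : ∃ A B : ℝ → ℝ,
      (∀ t, A t = Real.exp (-2 * w t) * (-(w2 t) + (1/2) * (w1 t)^2)) ∧
      (∀ t, B t = Real.exp (-2 * w t) * (-(1/2) * (w1 t)^2)) :=
    ⟨_, _, fun _ => rfl, fun _ => rfl⟩
  have hsum : ∀ x ∈ S, (∑ k, (pd (n + 2) S v k x) ^ 2) = (w1 (x ℓ))^2 := by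
    intro x hx
    have : ∀ k : Fin (n + 2), (pd (n + 2) S v k x)^2
        = (if k = ℓ then (w1 (x ℓ))^2 else 0) := by
      intro k
      rw [hpdv x hx k]
      split <;> simp
    rw [Finset.sum_congr rfl (fun k _ => this k)]
    simp
  have hdiag : ∀ x ∈ S, mHess (n + 2) S v x
      = Matrix.diagonal (fun i => if i = ℓ then A (x ℓ) else B (x ℓ)) := by
    intro x hx
    funext i j
    show Real.exp (-2 * v x) *
      (-(pd (n + 2) S (fun y => pd (n + 2) S v j y) i x)
        + pd (n + 2) S v i x * pd (n + 2) S v j x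
        - (1 / 2) * (∑ k, (pd (n + 2) S v k x) ^ 2) * (if i = j then (1 : ℝ) else 0)) = _
    rw [hpdpd x hx i j, hpdv x hx i, hpdv x hx j, hsum x hx, hvw x hx]
    by_cases hij : i = j
    · subst hij
      rw [Matrix.diagonal_apply_eq]
      by_cases hi : i = ℓ
      · rw [if_pos hi, if_pos hi, if_pos hi, if_pos hi, if_pos rfl, hA]
        ring
      · rw [if_neg hi, if_neg hi, if_neg hi, if_pos rfl, hB]
        ring
    · rw [Matrix.diagonal_apply_ne _ hij]
      by_cases hi : i = ℓ
      · have hjl : ¬(j = ℓ) := fun h => hij (by rw [hi, h])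
        rw [if_pos hi, if_neg hjl, if_pos hi, if_neg hjl, if_neg hij]
        ring
      · rw [if_neg hi, if_neg hi, if_neg hij]
        ring
  -- the diagonal entries lie in Γ
  have hD : ∀ t ∈ Set.Ici (0:ℝ),
      (fun i : Fin (n + 2) => if i = ℓ then A t else B t) ∈ Γ := by
    intro t ht
    have hxS : EuclideanSpace.single ℓ t ∈ S := by rw [← hι t]; exact hιS t ht
    have hxl : (EuclideanSpace.single ℓ t) ℓ = t := by
      simp [EuclideanSpace.single_apply]
    obtain ⟨ev, hev1, hev2⟩ := heig _ hxS
    rw [IsEigList, hdiag _ hxS, hxl, CLLaux.charpoly_diagonal] at hev1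
    have hroots : Multiset.map ev Finset.univ.val
        = Multiset.map (fun i : Fin (n + 2) => if i = ℓ then A t else B t) Finset.univ.val := by
      rw [← CLLaux.roots_prod, ← CLLaux.roots_prod, hev1]
    obtain ⟨σ, hσ⟩ := CLLaux.exists_comp_perm_eq _ _ hroots
    rw [← hσ]
    exact hperm σ _ hev2
  -- muSet facts
  have h1mu : ∀ c ∈ muSet (n + 2) Γ, 1 < c := by
    intro c hc
    by_contra hle
    push_neg at hle
    rcases eq_or_lt_of_le hle with h | h
    · apply hstar
      have : lamStar (n + 2) = (fun i : Fin (n + 2) => if (i:ℕ) = 0 then c else -1) := by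
        funext i; rw [lamStar, h]
      rw [this]; exact hc
    · apply hstar
      have := CLLaux.mem_muSet_upper hadd c hc 1 h
      exact this
  have hbdd : BddBelow (muSet (n + 2) Γ) := ⟨1, fun c hc => (h1mu c hc).le⟩
  obtain ⟨m, hm1, hmle⟩ : ∃ m : ℝ, 1 < m ∧ ∀ c ∈ muSet (n + 2) Γ, m ≤ c := by
    refine ⟨sInf (muSet (n + 2) Γ), ?_, fun c hc => csInf_le hbdd hc⟩
    exact h1mu _ ((CLLaux.isClosed_muSet Γ).csInf_mem hne hbdd)
  obtain ⟨δ, hδ, hδdef⟩ : ∃ δ : ℝ, 0 < δ ∧ δ = (m - 1)/2 := ⟨(m-1)/2, by linarith, rfl⟩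
  have hℓ0 : (ℓ:ℕ) ≠ 0 := by
    rw [hℓdef]
    show (Fin.last (n+1) : ℕ) ≠ 0
    simp [Fin.val_last]
  -- pointwise differential inequality
  have hodei : ∀ t ∈ Set.Ici (0:ℝ), derivWithin w1 (Set.Ici 0) t < 0 ∧
      derivWithin w1 (Set.Ici 0) t ≤ -δ * (w1 t)^2 := by
    intro t ht
    have hDt := hD t ht
    have hE : 0 < Real.exp (-2 * w t) := Real.exp_pos _
    show w2 t < 0 ∧ w2 t ≤ -δ * (w1 t)^2
    by_cases hz : w1 t = 0
    · -- B t = 0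
      have hB0 : B t = 0 := by rw [hB t, hz]; ring
      have hmem0 : (fun i : Fin (n + 2) => if i = ℓ then A t else 0) ∈ Γ := by
        rw [← hB0]; exact hDt
      obtain ⟨ε, hε, hmemε⟩ := CLLaux.perturb hopen ℓ (A t) hmem0
      have hmu := CLLaux.mem_muS_of_mem hscale hperm ℓ hℓ0 (A t) (-ε) (by linarith) hmemε
      rw [neg_neg] at hmu
      have hge := hmle _ hmu
      have hApos : 0 < A t := by
        have h9 : m * ε ≤ A t := (le_div_iff₀ hε).mp hge
        nlinarith
      have hw2 : w2 t < 0 := by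
        rw [hA t, hz] at hApos
        nlinarith [Real.exp_pos (-2 * w t)]
      exact ⟨hw2, by rw [hz]; simpa using hw2.le⟩
    · have hsq : 0 < (w1 t)^2 := by positivity
      have hBneg : B t < 0 := by
        rw [hB t]
        nlinarith
      have hmu := CLLaux.mem_muS_of_mem hscale hperm ℓ hℓ0 (A t) (B t) hBneg hDt
      have hge := hmle _ hmu
      have hAB : m * (-(B t)) ≤ A t := by
        have hBpos : 0 < -(B t) := by linarith
        have := mul_le_mul_of_nonneg_right hge hBpos.le
        rw [div_mul_cancel₀ _ hBpos.ne'] at this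
        exact this
      have hexp : -(w2 t) + (1/2) * (w1 t)^2 ≥ m * ((1/2) * (w1 t)^2) := by
        rw [hA t, hB t] at hAB
        rw [show -(Real.exp (-2 * w t) * (-(1/2) * (w1 t)^2))
            = Real.exp (-2 * w t) * ((1/2) * (w1 t)^2) from by ring] at hAB
        rw [← mul_assoc, mul_comm m (Real.exp (-2 * w t)), mul_assoc] at hAB
        exact le_of_mul_le_mul_left hAB hE
      constructor
      · nlinarith
      · rw [hδdef]; nlinarith
  have hw10 : w1 0 ≤ 0 := by
    have h0S : (0 : E (n + 2)) ∈ S := by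
      rw [hS]; show (0:ℝ) ≤ (0 : E (n+2)) ℓ; simp
    have := hpdv 0 h0S ℓ
    rw [if_pos rfl] at this
    have h0l : (0 : E (n+2)) ℓ = 0 := rfl
    rw [h0l] at this
    rw [← this]
    exact hder
  exact CLLaux.ode_contra hw1d δ hδ hw10 hodei
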